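/- A concept c of an extremal class C ⊆ {0,1}^n is a corner of C (i.e., C \ {c} is extremal) if and only if c lies in exactly one maximal cube of C. -/

import Mathlib

variable {n : ℕ}

/-- `S` is shattered by the concept class `C`. -/
def Shatters (C : Set (Fin n → Bool)) (S : Finset (Fin n)) : Prop :=
  ∀ f : Fin n → Bool, ∃ c ∈ C, ∀ x ∈ S, c x = f x

/-- `B` is a cube of `C` with dimension set `S`. -/
def IsCube (C B : Set (Fin n → Bool)) (S : Finset (Fin n)) : Prop :=
  B ⊆ C ∧ (∀ b ∈ B, ∀ b' ∈ B, ∀ x, x ∉ S → b x = b' x) ∧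
    (∀ f : Fin n → Bool, ∃ b ∈ B, ∀ x ∈ S, b x = f x)

/-- `S` is strongly shattered by `C`. -/
def StronglyShatters (C : Set (Fin n → Bool)) (S : Finset (Fin n)) : Prop :=
  ∃ B, IsCube C B S

/-- `C` is extremal: every shattered set is strongly shattered. -/
def Extremal (C : Set (Fin n → Bool)) : Prop :=
  ∀ S, Shatters C S → StronglyShatters C S

namespace CornerAux

/-- The full combinatorial cube through `c` with dimension set `S`. -/
def cubeAt (c : Fin n → Bool) (S : Finset (Fin n)) : Set (Fin n → Bool) :=
  {f | ∀ x ∉ S, f x = c x}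

lemma mem_cubeAt_self (c : Fin n → Bool) (S : Finset (Fin n)) : c ∈ cubeAt c S :=
  fun _ _ => rfl

/-- Patch `f` onto `c` on `S`. -/
def patch (c f : Fin n → Bool) (S : Finset (Fin n)) : Fin n → Bool :=
  fun x => if x ∈ S then f x else c x

lemma patch_mem (c f : Fin n → Bool) (S : Finset (Fin n)) : patch c f S ∈ cubeAt c S :=
  fun x hx => if_neg hx

lemma patch_eq_on (c f : Fin n → Bool) (S : Finset (Fin n)) :
    ∀ x ∈ S, patch c f S x = f x := fun _ hx => if_pos hx

lemma isCube_cubeAt {C : Set (Fin n → Bool)} {a : Fin n → Bool} {S : Finset (Fin n)}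
    (h : cubeAt a S ⊆ C) : IsCube C (cubeAt a S) S :=
  ⟨h, fun b hb b' hb' x hx => (hb x hx).trans (hb' x hx).symm,
   fun f => ⟨patch a f S, patch_mem a f S, patch_eq_on a f S⟩⟩

lemma cube_eq_cubeAt {C B : Set (Fin n → Bool)} {S : Finset (Fin n)} {a : Fin n → Bool}
    (h : IsCube C B S) (ha : a ∈ B) : B = cubeAt a S := by
  ext f
  constructor
  · intro hf x hx
    exact h.2.1 f hf a ha x hx
  · intro hf
    obtain ⟨b, hb, hbf⟩ := h.2.2 f
    have : b = f := by
      funext x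
      by_cases hx : x ∈ S
      · exact hbf x hx
      · exact (h.2.1 b hb a ha x hx).trans (hf x hx).symm
    rwa [this] at hb

lemma cubeAt_subset_cubeAt {a : Fin n → Bool} {S T : Finset (Fin n)}
    (h : cubeAt a S ⊆ cubeAt a T) : S ⊆ T := by
  intro i hi
  by_contra hiT
  have hg : Function.update a i (!(a i)) ∈ cubeAt a S := by
    intro x hx
    have hxi : x ≠ i := fun he => hx (he ▸ hi)
    exact Function.update_of_ne hxi _ a
  have := h hg i hiT
  rw [Function.update_self] at this
  exact (Bool.not_ne_self (a i)) this

lemma cubeAt_inj {a : Fin n → Bool} {S T : Finset (Fin n)}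
    (h : cubeAt a S = cubeAt a T) : S = T :=
  le_antisymm (cubeAt_subset_cubeAt h.le) (cubeAt_subset_cubeAt h.ge)

lemma cube_nonempty {C B : Set (Fin n → Bool)} {S : Finset (Fin n)}
    (h : IsCube C B S) : B.Nonempty := by
  obtain ⟨b, hb, -⟩ := h.2.2 (fun _ => false)
  exact ⟨b, hb⟩

lemma isCube_mono {C C' B : Set (Fin n → Bool)} {S : Finset (Fin n)}
    (h : IsCube C B S) (hCC : C ⊆ C') : IsCube C' B S :=
  ⟨h.1.trans hCC, h.2.1, h.2.2⟩

lemma stronglyShatters_mono {C C' : Set (Fin n → Bool)} {S : Finset (Fin n)}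
    (hCC : C ⊆ C') (h : StronglyShatters C S) : StronglyShatters C' S := by
  obtain ⟨B, hB⟩ := h
  exact ⟨B, isCube_mono hB hCC⟩

lemma st_subset_sh {C : Set (Fin n → Bool)} {S : Finset (Fin n)}
    (h : StronglyShatters C S) : Shatters C S := by
  obtain ⟨B, hB⟩ := h
  intro f
  obtain ⟨b, hb, hbf⟩ := hB.2.2 f
  exact ⟨b, hB.1 hb, hbf⟩

end CornerAux
namespace CornerAux

/-- The family of strongly shattered sets. -/
def stt (C : Set (Fin n → Bool)) : Set (Finset (Fin n)) := {S | StronglyShatters C S}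

/-- The half of `C` where coordinate `i` takes value `b`. -/
def Cb (C : Set (Fin n → Bool)) (i : Fin n) (b : Bool) : Set (Fin n → Bool) :=
  {f ∈ C | f i = b}

lemma Cb_subset (C : Set (Fin n → Bool)) (i : Fin n) (b : Bool) : Cb C i b ⊆ C :=
  fun _ hf => hf.1

lemma Cb_union (C : Set (Fin n → Bool)) (i : Fin n) :
    Cb C i false ∪ Cb C i true = C := by
  ext f
  constructor
  · rintro (h | h) <;> exact h.1
  · intro h
    cases hb : f i
    · exact Or.inl ⟨h, hb⟩
    · exact Or.inr ⟨h, hb⟩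

lemma Cb_disjoint (C : Set (Fin n → Bool)) (i : Fin n) :
    Disjoint (Cb C i false) (Cb C i true) := by
  rw [Set.disjoint_left]
  rintro f ⟨-, h0⟩ ⟨-, h1⟩
  rw [h0] at h1
  exact Bool.false_ne_true h1

lemma ncard_Cb (C : Set (Fin n → Bool)) (i : Fin n) :
    (Cb C i false).ncard + (Cb C i true).ncard = C.ncard := by
  rw [← Set.ncard_union_eq (Cb_disjoint C i) (Set.toFinite _) (Set.toFinite _), Cb_union]

lemma not_mem_of_st_Cb {C : Set (Fin n → Bool)} {i : Fin n} {b : Bool} {S : Finset (Fin n)}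
    (h : StronglyShatters (Cb C i b) S) : i ∉ S := by
  intro hiS
  obtain ⟨B, hB⟩ := h
  obtain ⟨g, hg, hgf⟩ := hB.2.2 (fun _ => !b)
  have h1 : g i = !b := hgf i hiS
  have h2 : g i = b := (hB.1 hg).2
  rw [h2] at h1
  exact (Bool.not_ne_self b) h1.symm

lemma st_Cb_of_st {C : Set (Fin n → Bool)} {i : Fin n} {S : Finset (Fin n)}
    (hiS : i ∉ S) (h : StronglyShatters C S) : ∃ b, StronglyShatters (Cb C i b) S := by
  obtain ⟨B, hB⟩ := h
  obtain ⟨b0, hb0⟩ := cube_nonempty hB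
  refine ⟨b0 i, B, ?_, hB.2.1, hB.2.2⟩
  intro g hg
  exact ⟨hB.1 hg, hB.2.1 g hg b0 hb0 i hiS⟩

lemma st_erase_of_st {C : Set (Fin n → Bool)} {i : Fin n} {S : Finset (Fin n)}
    (hiS : i ∈ S) (h : StronglyShatters C S) (b : Bool) :
    StronglyShatters (Cb C i b) (S.erase i) := by
  obtain ⟨B, hB⟩ := h
  refine ⟨B ∩ {f | f i = b}, ?_, ?_, ?_⟩
  · rintro f ⟨hf, hfi⟩
    exact ⟨hB.1 hf, hfi⟩
  · rintro f ⟨hf, hfi⟩ g ⟨hg, hgi⟩ x hx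
    by_cases hxi : x = i
    · subst hxi; rw [hfi, hgi]
    · exact hB.2.1 f hf g hg x (fun hxS => hx (Finset.mem_erase.2 ⟨hxi, hxS⟩))
  · intro f
    obtain ⟨g, hg, hgf⟩ := hB.2.2 (Function.update f i b)
    have hgi : g i = b := by rw [hgf i hiS, Function.update_self]
    refine ⟨g, ⟨hg, hgi⟩, ?_⟩
    intro x hx
    rw [hgf x (Finset.mem_of_mem_erase hx),
      Function.update_of_ne (Finset.ne_of_mem_erase hx) _ _]

/-- Splitting the strongly shattered family along coordinate `i`. -/
lemma stt_split_eq (C : Set (Fin n → Bool)) (i : Fin n) :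
    {S ∈ stt C | i ∉ S} = stt (Cb C i false) ∪ stt (Cb C i true) := by
  ext S
  constructor
  · rintro ⟨hS, hiS⟩
    rcases st_Cb_of_st hiS hS with ⟨b, hb⟩
    cases b
    · exact Or.inl hb
    · exact Or.inr hb
  · rintro (h | h) <;>
      exact ⟨stronglyShatters_mono (Cb_subset C i _) h, not_mem_of_st_Cb h⟩

lemma stt_erase_maps (C : Set (Fin n → Bool)) (i : Fin n) :
    (Finset.erase · i) '' {S ∈ stt C | i ∈ S} ⊆ stt (Cb C i false) ∩ stt (Cb C i true) := by
  rintro T ⟨S, ⟨hS, hiS⟩, rfl⟩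
  exact ⟨st_erase_of_st hiS hS false, st_erase_of_st hiS hS true⟩

lemma erase_injOn (C : Set (Fin n → Bool)) (i : Fin n) :
    Set.InjOn (Finset.erase · i) {S ∈ stt C | i ∈ S} := by
  rintro S ⟨-, hiS⟩ T ⟨-, hiT⟩ h
  simp only at h
  rw [← Finset.insert_erase hiS, ← Finset.insert_erase hiT, h]

lemma stt_ncard_split (C : Set (Fin n → Bool)) (i : Fin n) :
    (stt C).ncard =
      (stt (Cb C i false) ∪ stt (Cb C i true)).ncard + ({S ∈ stt C | i ∈ S}).ncard := by
  have hsplit : stt C = {S ∈ stt C | i ∉ S} ∪ {S ∈ stt C | i ∈ S} := by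
    ext S; by_cases h : i ∈ S <;> simp [h]
  have hdisj : Disjoint {S ∈ stt C | i ∉ S} {S ∈ stt C | i ∈ S} := by
    rw [Set.disjoint_left]
    rintro S ⟨-, h⟩ ⟨-, h'⟩
    exact h h'
  conv_lhs => rw [hsplit]
  rw [Set.ncard_union_eq hdisj (Set.toFinite _) (Set.toFinite _), ← stt_split_eq]

/-- The basic counting inequality for the split. -/
lemma stt_ncard_le_split (C : Set (Fin n → Bool)) (i : Fin n) :
    (stt C).ncard ≤ (stt (Cb C i false)).ncard + (stt (Cb C i true)).ncard := by
  have h1 := stt_ncard_split C i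
  have h2 : ({S ∈ stt C | i ∈ S}).ncard ≤
      (stt (Cb C i false) ∩ stt (Cb C i true)).ncard := by
    rw [← Set.ncard_image_of_injOn (erase_injOn C i)]
    exact Set.ncard_le_ncard (stt_erase_maps C i) (Set.toFinite _)
  have h3 := Set.ncard_union_add_ncard_inter (stt (Cb C i false)) (stt (Cb C i true))
    (Set.toFinite _) (Set.toFinite _)
  omega

/-- In the equality case, every commonly strongly shattered set extends by `i`. -/
lemma stt_insert_of_eq {C : Set (Fin n → Bool)} {i : Fin n}
    (heq : (stt C).ncard = (stt (Cb C i false)).ncard + (stt (Cb C i true)).ncard)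
    {S : Finset (Fin n)} (h0 : StronglyShatters (Cb C i false) S)
    (h1 : StronglyShatters (Cb C i true) S) : StronglyShatters C (insert i S) := by
  have h1' := stt_ncard_split C i
  have h3 := Set.ncard_union_add_ncard_inter (stt (Cb C i false)) (stt (Cb C i true))
    (Set.toFinite _) (Set.toFinite _)
  have himg : (Finset.erase · i) '' {S ∈ stt C | i ∈ S} =
      stt (Cb C i false) ∩ stt (Cb C i true) := by
    apply Set.eq_of_subset_of_ncard_le (stt_erase_maps C i) _ (Set.toFinite _)
    rw [Set.ncard_image_of_injOn (erase_injOn C i)]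
    omega
  have hmem : S ∈ (Finset.erase · i) '' {S ∈ stt C | i ∈ S} := by
    rw [himg]; exact ⟨h0, h1⟩
  obtain ⟨T, ⟨hT, hiT⟩, rfl⟩ := hmem
  rwa [Finset.insert_erase hiT]

end CornerAux
namespace CornerAux

lemma exists_split_coord {C : Set (Fin n → Bool)} {f g : Fin n → Bool}
    (hf : f ∈ C) (hg : g ∈ C) (hfg : f ≠ g) :
    ∃ i, (Cb C i false).Nonempty ∧ (Cb C i true).Nonempty := by
  have : ∃ i, f i ≠ g i := by
    by_contra h
    push_neg at h
    exact hfg (funext h)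
  obtain ⟨i, hi⟩ := this
  refine ⟨i, ?_⟩
  cases hfi : f i
  · have hgi : g i = true := by
      cases hgi : g i
      · rw [hfi, hgi] at hi; exact absurd rfl hi
      · rfl
    exact ⟨⟨f, hf, hfi⟩, ⟨g, hg, hgi⟩⟩
  · have hgi : g i = false := by
      cases hgi : g i
      · rfl
      · rw [hfi, hgi] at hi; exact absurd rfl hi
    exact ⟨⟨g, hg, hgi⟩, ⟨f, hf, hfi⟩⟩

lemma ncard_Cb_lt {C : Set (Fin n → Bool)} {i : Fin n} {b : Bool}
    (h : (Cb C i (!b)).Nonempty) : (Cb C i b).ncard < C.ncard := by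
  apply Set.ncard_lt_ncard _ (Set.toFinite _)
  rw [Set.ssubset_iff_of_subset (Cb_subset C i b)]
  obtain ⟨f, hf⟩ := h
  refine ⟨f, hf.1, ?_⟩
  intro hmem
  have := hmem.2
  rw [hf.2] at this
  exact (Bool.not_ne_self b) this

lemma stt_empty : stt (∅ : Set (Fin n → Bool)) = ∅ := by
  ext S
  simp only [stt, Set.mem_setOf_eq, Set.mem_empty_iff_false, iff_false]
  rintro ⟨B, hB⟩
  obtain ⟨b, hb⟩ := cube_nonempty hB
  exact hB.1 hb

lemma stt_subsingleton {C : Set (Fin n → Bool)} (h : C.Subsingleton) :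
    stt C ⊆ {∅} := by
  intro S hS
  obtain ⟨B, hB⟩ := hS
  simp only [Set.mem_singleton_iff]
  by_contra hne
  obtain ⟨i, hi⟩ := Finset.nonempty_iff_ne_empty.2 hne
  obtain ⟨b1, hb1, hb1f⟩ := hB.2.2 (fun _ => false)
  obtain ⟨b2, hb2, hb2f⟩ := hB.2.2 (fun _ => true)
  have : b1 = b2 := h (hB.1 hb1) (hB.1 hb2)
  have h1 : b1 i = false := hb1f i hi
  have h2 : b2 i = true := hb2f i hi
  rw [this, h2] at h1
  simp at h1

/-- The reverse Sauer inequality: `|st(C)| ≤ |C|`. -/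
lemma stt_ncard_le : ∀ (k : ℕ) (C : Set (Fin n → Bool)), C.ncard ≤ k →
    (stt C).ncard ≤ C.ncard := by
  intro k
  induction k with
  | zero =>
    intro C hC
    have : C = ∅ := by
      rw [← Set.ncard_eq_zero (Set.toFinite _)]; omega
    rw [this, stt_empty]
    simp
  | succ m ih =>
    intro C hC
    by_cases hsub : C.Subsingleton
    · rcases C.eq_empty_or_nonempty with rfl | hne
      · rw [stt_empty]
        simp
      · have h1 : (stt C).ncard ≤ 1 := by
          have := Set.ncard_le_ncard (stt_subsingleton hsub) (Set.toFinite _)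
          simpa using this
        have h2 : 1 ≤ C.ncard := Set.ncard_pos (Set.toFinite _) |>.2 hne
        omega
    · rw [Set.not_subsingleton_iff] at hsub
      obtain ⟨f, hf, g, hg, hfg⟩ := hsub
      obtain ⟨i, h0, h1⟩ := exists_split_coord hf hg hfg
      have hlt0 : (Cb C i false).ncard < C.ncard := ncard_Cb_lt (b := false) h1
      have hlt1 : (Cb C i true).ncard < C.ncard := ncard_Cb_lt (b := true) h0
      have ih0 := ih (Cb C i false) (by omega)
      have ih1 := ih (Cb C i true) (by omega)
      have := stt_ncard_le_split C i
      have := ncard_Cb C i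
      omega

/-- `C` is count-extremal. -/
def XT (C : Set (Fin n → Bool)) : Prop := (stt C).ncard = C.ncard

lemma XT_split {C : Set (Fin n → Bool)} {i : Fin n} (hX : XT C)
    (h0 : (Cb C i false).Nonempty) (h1 : (Cb C i true).Nonempty) :
    XT (Cb C i false) ∧ XT (Cb C i true) ∧
      ∀ S, StronglyShatters (Cb C i false) S → StronglyShatters (Cb C i true) S →
        StronglyShatters C (insert i S) := by
  have hle := stt_ncard_le_split C i
  have hc := ncard_Cb C i
  have hl0 := stt_ncard_le (Cb C i false).ncard (Cb C i false) le_rfl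
  have hl1 := stt_ncard_le (Cb C i true).ncard (Cb C i true) le_rfl
  have heq : (stt C).ncard = (stt (Cb C i false)).ncard + (stt (Cb C i true)).ncard := by
    unfold XT at hX; omega
  refine ⟨?_, ?_, fun S hS0 hS1 => stt_insert_of_eq heq hS0 hS1⟩ <;> unfold XT at * <;> omega

end CornerAux
namespace CornerAux

/-- The family of shattered sets. -/
def shh (C : Set (Fin n → Bool)) : Set (Finset (Fin n)) := {S | Shatters C S}

lemma shatters_mono {C C' : Set (Fin n → Bool)} {S : Finset (Fin n)}
    (hCC : C ⊆ C') (h : Shatters C S) : Shatters C' S := by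
  intro f
  obtain ⟨c, hc, hcf⟩ := h f
  exact ⟨c, hCC hc, hcf⟩

lemma sh_Cb_not_mem {C : Set (Fin n → Bool)} {i : Fin n} {b : Bool} {S : Finset (Fin n)}
    (h : Shatters (Cb C i b) S) : i ∉ S := by
  intro hiS
  obtain ⟨c, hc, hcf⟩ := h (fun _ => !b)
  have h1 : c i = !b := hcf i hiS
  have h2 : c i = b := hc.2
  rw [h2] at h1
  exact (Bool.not_ne_self b) h1.symm

lemma sh_insert {C : Set (Fin n → Bool)} {i : Fin n} {S : Finset (Fin n)}
    (h0 : Shatters (Cb C i false) S) (h1 : Shatters (Cb C i true) S) :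
    Shatters C (insert i S) := by
  intro f
  have key : ∀ b : Bool, f i = b → ∃ c ∈ Cb C i b, ∀ x ∈ S, c x = f x := by
    intro b hb
    cases b
    · exact h0 f
    · exact h1 f
  obtain ⟨c, hc, hcf⟩ := key (f i) rfl
  refine ⟨c, hc.1, ?_⟩
  intro x hx
  rcases Finset.mem_insert.1 hx with rfl | hxS
  · exact hc.2
  · exact hcf x hxS

lemma sh_erase {C : Set (Fin n → Bool)} {i : Fin n} {S : Finset (Fin n)}
    (hiS : i ∈ S) (h : Shatters C S) (b : Bool) : Shatters (Cb C i b) (S.erase i) := by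
  intro f
  obtain ⟨c, hc, hcf⟩ := h (Function.update f i b)
  have hci : c i = b := by rw [hcf i hiS, Function.update_self]
  refine ⟨c, ⟨hc, hci⟩, ?_⟩
  intro x hx
  rw [hcf x (Finset.mem_of_mem_erase hx), Function.update_of_ne (Finset.ne_of_mem_erase hx)]

lemma shh_ncard_split (C : Set (Fin n → Bool)) (i : Fin n) :
    (shh C).ncard = ({S ∈ shh C | i ∉ S}).ncard + ({S ∈ shh C | i ∈ S}).ncard := by
  have hsplit : shh C = {S ∈ shh C | i ∉ S} ∪ {S ∈ shh C | i ∈ S} := by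
    ext S; by_cases h : i ∈ S <;> simp [h]
  have hdisj : Disjoint {S ∈ shh C | i ∉ S} {S ∈ shh C | i ∈ S} := by
    rw [Set.disjoint_left]
    rintro S ⟨-, h⟩ ⟨-, h'⟩
    exact h h'
  conv_lhs => rw [hsplit]
  rw [Set.ncard_union_eq hdisj (Set.toFinite _) (Set.toFinite _)]

/-- Pajor's inequality: `|C| ≤ |sh(C)|`. -/
lemma pajor : ∀ (k : ℕ) (C : Set (Fin n → Bool)), C.ncard ≤ k →
    C.ncard ≤ (shh C).ncard := by
  intro k
  induction k with
  | zero =>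
    intro C hC
    omega
  | succ m ih =>
    intro C hC
    by_cases hsub : C.Subsingleton
    · rcases C.eq_empty_or_nonempty with rfl | hne
      · simp
      · have h1 : C.ncard = 1 := by
          obtain ⟨c₀, hc₀⟩ := hne
          rw [hsub.eq_singleton_of_mem hc₀, Set.ncard_singleton]
        have h2 : (∅ : Finset (Fin n)) ∈ shh C := by
          intro f
          obtain ⟨c₀, hc₀⟩ := hne
          exact ⟨c₀, hc₀, fun x hx => absurd hx (Finset.notMem_empty x)⟩
        have h3 : 1 ≤ (shh C).ncard := Set.ncard_pos (Set.toFinite _) |>.2 ⟨_, h2⟩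
        omega
    · rw [Set.not_subsingleton_iff] at hsub
      obtain ⟨f, hf, g, hg, hfg⟩ := hsub
      obtain ⟨i, h0, h1⟩ := exists_split_coord hf hg hfg
      have hlt0 : (Cb C i false).ncard < C.ncard := ncard_Cb_lt (b := false) h1
      have hlt1 : (Cb C i true).ncard < C.ncard := ncard_Cb_lt (b := true) h0
      have ih0 := ih (Cb C i false) (by omega)
      have ih1 := ih (Cb C i true) (by omega)
      have hcb := ncard_Cb C i
      -- union of the halves' shattered families sits in the `i ∉ S` part
      have hQ : shh (Cb C i false) ∪ shh (Cb C i true) ⊆ {S ∈ shh C | i ∉ S} := by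
        rintro S (h | h) <;>
          exact ⟨shatters_mono (Cb_subset C i _) h, sh_Cb_not_mem h⟩
      -- the intersection injects into the `i ∈ S` part
      have hP : (insert i) '' (shh (Cb C i false) ∩ shh (Cb C i true)) ⊆
          {S ∈ shh C | i ∈ S} := by
        rintro T ⟨S, ⟨hS0, hS1⟩, rfl⟩
        exact ⟨sh_insert hS0 hS1, Finset.mem_insert_self i S⟩
      have hinj : Set.InjOn (insert i) (shh (Cb C i false) ∩ shh (Cb C i true)) := by
        rintro S ⟨hS, -⟩ T ⟨hT, -⟩ h
        have hiS := sh_Cb_not_mem hS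
        have hiT := sh_Cb_not_mem hT
        rw [← Finset.erase_insert hiS, ← Finset.erase_insert hiT, h]
      have e1 : (shh (Cb C i false) ∪ shh (Cb C i true)).ncard ≤
          ({S ∈ shh C | i ∉ S}).ncard := Set.ncard_le_ncard hQ (Set.toFinite _)
      have e2 : (shh (Cb C i false) ∩ shh (Cb C i true)).ncard ≤
          ({S ∈ shh C | i ∈ S}).ncard := by
        rw [← Set.ncard_image_of_injOn hinj]
        exact Set.ncard_le_ncard hP (Set.toFinite _)
      have e3 := Set.ncard_union_add_ncard_inter (shh (Cb C i false)) (shh (Cb C i true))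
        (Set.toFinite _) (Set.toFinite _)
      have e4 := shh_ncard_split C i
      omega

lemma XT_of_extremal {C : Set (Fin n → Bool)} (hC : Extremal C) : XT C := by
  have hsub : stt C = shh C := Set.ext fun S => ⟨fun h => st_subset_sh h, fun h => hC S h⟩
  have h1 := stt_ncard_le C.ncard C le_rfl
  have h2 := pajor C.ncard C le_rfl
  unfold XT
  rw [hsub] at h1 ⊢
  omega

lemma extremal_of_XT : ∀ (k : ℕ) (C : Set (Fin n → Bool)), C.ncard ≤ k → XT C →
    Extremal C := by
  intro k
  induction k with
  | zero =>
    intro C hC hX S hS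
    exfalso
    have hCe : C = ∅ := by rw [← Set.ncard_eq_zero (Set.toFinite _)]; omega
    obtain ⟨c, hc, -⟩ := hS (fun _ => false)
    rw [hCe] at hc
    exact hc
  | succ m ih =>
    intro C hC hX S hS
    rcases S.eq_empty_or_nonempty with rfl | ⟨i, hiS⟩
    · obtain ⟨c₀, hc₀, -⟩ := hS (fun _ => false)
      refine ⟨{c₀}, Set.singleton_subset_iff.2 hc₀, ?_, ?_⟩
      · rintro b hb b' hb' x -
        rw [Set.mem_singleton_iff] at hb hb'
        rw [hb, hb']
      · intro f
        exact ⟨c₀, rfl, fun x hx => absurd hx (Finset.notMem_empty x)⟩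
    · have h0 : (Cb C i false).Nonempty := by
        obtain ⟨c, hc, hcf⟩ := hS (fun _ => false)
        exact ⟨c, hc, hcf i hiS⟩
      have h1 : (Cb C i true).Nonempty := by
        obtain ⟨c, hc, hcf⟩ := hS (fun _ => true)
        exact ⟨c, hc, hcf i hiS⟩
      obtain ⟨hX0, hX1, hins⟩ := XT_split hX h0 h1
      have hlt0 : (Cb C i false).ncard < C.ncard := ncard_Cb_lt (b := false) h1
      have hlt1 : (Cb C i true).ncard < C.ncard := ncard_Cb_lt (b := true) h0
      have hst0 := ih (Cb C i false) (by omega) hX0 (S.erase i) (sh_erase hiS hS false)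
      have hst1 := ih (Cb C i true) (by omega) hX1 (S.erase i) (sh_erase hiS hS true)
      have := hins (S.erase i) hst0 hst1
      rwa [Finset.insert_erase hiS] at this

end CornerAux
namespace CornerAux

lemma halves_nonempty {C : Set (Fin n → Bool)} {f g : Fin n → Bool} {i : Fin n}
    (hf : f ∈ C) (hg : g ∈ C) (hi : f i ≠ g i) :
    (Cb C i false).Nonempty ∧ (Cb C i true).Nonempty := by
  cases hfi : f i
  · have hgi : g i = true := by
      cases hgi : g i
      · rw [hfi, hgi] at hi; exact absurd rfl hi
      · rfl
    exact ⟨⟨f, hf, hfi⟩, ⟨g, hg, hgi⟩⟩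
  · have hgi : g i = false := by
      cases hgi : g i
      · rfl
      · rw [hfi, hgi] at hi; exact absurd rfl hi
    exact ⟨⟨g, hg, hgi⟩, ⟨f, hf, hfi⟩⟩

/-- In a count-extremal class, a maximal cube is the unique cube with its
dimension set. -/
lemma cube_unique : ∀ (k : ℕ) (C : Set (Fin n → Bool)), C.ncard ≤ k → XT C →
    ∀ B S, IsCube C B S → (∀ B' S', IsCube C B' S' → B ⊆ B' → B = B') →
    ∀ B'', IsCube C B'' S → B'' = B := by
  intro k
  induction k with
  | zero =>
    intro C hC hX B S hB hmax B'' hB''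
    exfalso
    have hCe : C = ∅ := by rw [← Set.ncard_eq_zero (Set.toFinite _)]; omega
    obtain ⟨x, hx⟩ := cube_nonempty hB
    rw [hCe] at hB
    exact hB.1 hx
  | succ m ih =>
    intro C hC hX B S hB hmax B'' hB''
    obtain ⟨x₀, hx₀⟩ := cube_nonempty hB
    obtain ⟨x'', hx''⟩ := cube_nonempty hB''
    by_cases hcase : ∃ i, i ∉ S ∧ ∃ f ∈ C, ∃ g ∈ C, f i ≠ g i
    · obtain ⟨i, hiS, f, hf, g, hg, hfg⟩ := hcase
      obtain ⟨h0, h1⟩ := halves_nonempty hf hg hfg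
      obtain ⟨hX0, hX1, hins⟩ := XT_split hX h0 h1
      have hXb : ∀ bb, XT (Cb C i bb) := by
        intro bb; cases bb
        · exact hX0
        · exact hX1
      have hlt : ∀ bb, (Cb C i bb).ncard ≤ m := by
        intro bb; cases bb
        · have := ncard_Cb_lt (b := false) h1; omega
        · have := ncard_Cb_lt (b := true) h0; omega
      have hBsub : B ⊆ Cb C i (x₀ i) :=
        fun y hy => ⟨hB.1 hy, hB.2.1 y hy x₀ hx₀ i hiS⟩
      have hBcube : IsCube (Cb C i (x₀ i)) B S := ⟨hBsub, hB.2.1, hB.2.2⟩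
      have hBmax : ∀ B' S', IsCube (Cb C i (x₀ i)) B' S' → B ⊆ B' → B = B' :=
        fun B' S' hB' hsub => hmax B' S' (isCube_mono hB' (Cb_subset C i _)) hsub
      have hB''sub : B'' ⊆ Cb C i (x'' i) :=
        fun y hy => ⟨hB''.1 hy, hB''.2.1 y hy x'' hx'' i hiS⟩
      by_cases hbb : x'' i = x₀ i
      · have hB''cube : IsCube (Cb C i (x₀ i)) B'' S :=
          ⟨hbb ▸ hB''sub, hB''.2.1, hB''.2.2⟩
        exact ih (Cb C i (x₀ i)) (hlt _) (hXb _) B S hBcube hBmax B'' hB''cube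
      · -- both halves strongly shatter S
        have hall : ∀ bb, StronglyShatters (Cb C i bb) S := by
          intro bb
          by_cases hbb0 : bb = x₀ i
          · exact ⟨B, hbb0 ▸ hBcube⟩
          · have hbb'' : bb = x'' i := by
              revert hbb hbb0
              cases x₀ i <;> cases x'' i <;> cases bb <;> simp
            exact ⟨B'', hbb'' ▸ ⟨hB''sub, hB''.2.1, hB''.2.2⟩⟩
        obtain ⟨B₃, hB₃⟩ := hins S (hall false) (hall true)
        have hcube₃ : IsCube (Cb C i (x₀ i)) (B₃ ∩ {h | h i = x₀ i}) S := by
          refine ⟨?_, ?_, ?_⟩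
          · rintro y ⟨hy, hyi⟩
            exact ⟨hB₃.1 hy, hyi⟩
          · rintro y ⟨hy, hyi⟩ z ⟨hz, hzi⟩ x hx
            by_cases hxi : x = i
            · subst hxi; rw [hyi, hzi]
            · refine hB₃.2.1 y hy z hz x ?_
              intro hxmem
              rcases Finset.mem_insert.1 hxmem with h | h
              · exact hxi h
              · exact hx h
          · intro fp
            obtain ⟨gp, hgp, hgpf⟩ := hB₃.2.2 (Function.update fp i (x₀ i))
            have hgpi : gp i = x₀ i := by
              rw [hgpf i (Finset.mem_insert_self i S), Function.update_self]
            refine ⟨gp, ⟨hgp, hgpi⟩, ?_⟩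
            intro x hx
            have hxi : x ≠ i := fun he => hiS (he ▸ hx)
            rw [hgpf x (Finset.mem_insert_of_mem hx), Function.update_of_ne hxi]
        have heqB : B₃ ∩ {h | h i = x₀ i} = B :=
          ih (Cb C i (x₀ i)) (hlt _) (hXb _) B S hBcube hBmax _ hcube₃
        have hBB₃ : B = B₃ := hmax B₃ (insert i S) hB₃ (heqB ▸ Set.inter_subset_left)
        exfalso
        obtain ⟨z, hz, hzf⟩ := hB₃.2.2 (fun _ => !(x₀ i))
        have hz1 : z i = !(x₀ i) := hzf i (Finset.mem_insert_self i S)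
        have hz2 : z i = x₀ i := (hBsub (hBB₃ ▸ hz)).2
        rw [hz2] at hz1
        exact (Bool.not_ne_self (x₀ i)) hz1.symm
    · push_neg at hcase
      have hagree : ∀ x ∉ S, x'' x = x₀ x :=
        fun x hx => hcase x hx x'' (hB''.1 hx'') x₀ (hB.1 hx₀)
      rw [cube_eq_cubeAt hB hx₀, cube_eq_cubeAt hB'' hx'']
      ext h
      constructor
      · intro hh x hx
        rw [← hagree x hx]
        exact hh x hx
      · intro hh x hx
        rw [hagree x hx]
        exact hh x hx

end CornerAux
namespace CornerAux

lemma cubeAt_mono {c : Fin n → Bool} {S T : Finset (Fin n)} (h : S ⊆ T) :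
    cubeAt c S ⊆ cubeAt c T :=
  fun g hg x hx => hg x (fun hxS => hx (h hxS))

/-- Claim A: a strongly shattered set that dies when `c` is removed gives a
maximal `cubeAt c` structure. -/
lemma maxS_of_D {C : Set (Fin n → Bool)} {c : Fin n → Bool} {S : Finset (Fin n)}
    (hst : StronglyShatters C S) (hnot : ¬ StronglyShatters (C \ {c}) S) :
    cubeAt c S ⊆ C ∧ ∀ S', S ⊆ S' → cubeAt c S' ⊆ C → S' = S := by
  obtain ⟨B, hB⟩ := hst
  have hcB : c ∈ B := by
    by_contra hcB
    refine hnot ⟨B, ?_, hB.2.1, hB.2.2⟩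
    intro y hy
    refine ⟨hB.1 hy, ?_⟩
    simp only [Set.mem_singleton_iff]
    rintro rfl
    exact hcB hy
  have hBeq : B = cubeAt c S := cube_eq_cubeAt hB hcB
  refine ⟨hBeq ▸ hB.1, ?_⟩
  intro S' hSS' hsub'
  by_contra hne
  have hss : S ⊂ S' := ⟨hSS', fun h => hne (Finset.Subset.antisymm h hSS')⟩
  obtain ⟨i, hiS', hiS⟩ := Finset.exists_of_ssubset hss
  set cf := Function.update c i (!(c i)) with hcf
  have hsub2 : cubeAt cf S ⊆ cubeAt c S' := by
    intro g hg x hx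
    have hxi : x ≠ i := fun he => hx (he ▸ hiS')
    have hxS : x ∉ S := fun hxS => hx (hSS' hxS)
    rw [hg x hxS, hcf, Function.update_of_ne hxi]
  refine hnot ⟨cubeAt cf S, isCube_cubeAt ?_⟩
  intro g hg
  refine ⟨hsub' (hsub2 hg), ?_⟩
  simp only [Set.mem_singleton_iff]
  rintro rfl
  have : g i = cf i := hg i hiS
  rw [hcf, Function.update_self] at this
  exact (Bool.not_ne_self (g i)) this.symm

/-- Claim B: a maximal `cubeAt c` structure dies when `c` is removed. -/
lemma D_of_maxS {C : Set (Fin n → Bool)} {c : Fin n → Bool} {S : Finset (Fin n)}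
    (hC : Extremal C) (h1 : cubeAt c S ⊆ C)
    (h2 : ∀ S', S ⊆ S' → cubeAt c S' ⊆ C → S' = S) :
    StronglyShatters C S ∧ ¬ StronglyShatters (C \ {c}) S := by
  have hcube : IsCube C (cubeAt c S) S := isCube_cubeAt h1
  have hmax : ∀ B' S', IsCube C B' S' → cubeAt c S ⊆ B' → cubeAt c S = B' := by
    intro B' S' hB' hsub
    have hcB' : c ∈ B' := hsub (mem_cubeAt_self c S)
    have hB'eq : B' = cubeAt c S' := cube_eq_cubeAt hB' hcB'
    have hSS' : S ⊆ S' := cubeAt_subset_cubeAt (hB'eq ▸ hsub)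
    rw [hB'eq, h2 S' hSS' (hB'eq ▸ hB'.1)]
  refine ⟨⟨cubeAt c S, hcube⟩, ?_⟩
  rintro ⟨B', hB'⟩
  have hB'C : IsCube C B' S := isCube_mono hB' Set.diff_subset
  have heq : B' = cubeAt c S :=
    cube_unique C.ncard C le_rfl (XT_of_extremal hC) (cubeAt c S) S hcube hmax B' hB'C
  have hcB' : c ∈ B' := heq ▸ mem_cubeAt_self c S
  exact (hB'.1 hcB').2 rfl

/-- Bridge: maximal cubes containing `c` are exactly the maximal
`cubeAt c` structures. -/
lemma maxcube_bridge {C B : Set (Fin n → Bool)} {c : Fin n → Bool} {S : Finset (Fin n)}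
    (hB : IsCube C B S) (hmax : ∀ B' S', IsCube C B' S' → B ⊆ B' → B = B')
    (hcB : c ∈ B) :
    B = cubeAt c S ∧ cubeAt c S ⊆ C ∧ ∀ S', S ⊆ S' → cubeAt c S' ⊆ C → S' = S := by
  have hBeq : B = cubeAt c S := cube_eq_cubeAt hB hcB
  refine ⟨hBeq, hBeq ▸ hB.1, ?_⟩
  intro S' hSS' hsub'
  have hBsub : B ⊆ cubeAt c S' := hBeq ▸ cubeAt_mono hSS'
  have := hmax (cubeAt c S') S' (isCube_cubeAt hsub') hBsub
  exact (cubeAt_inj ((hBeq.symm.trans this))).symm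

lemma maxcube_of_maxS {C : Set (Fin n → Bool)} {c : Fin n → Bool} {S : Finset (Fin n)}
    (h1 : cubeAt c S ⊆ C) (h2 : ∀ S', S ⊆ S' → cubeAt c S' ⊆ C → S' = S) :
    IsCube C (cubeAt c S) S ∧
      (∀ B' S', IsCube C B' S' → cubeAt c S ⊆ B' → cubeAt c S = B') := by
  refine ⟨isCube_cubeAt h1, ?_⟩
  intro B' S' hB' hsub
  have hcB' : c ∈ B' := hsub (mem_cubeAt_self c S)
  have hB'eq : B' = cubeAt c S' := cube_eq_cubeAt hB' hcB'
  have hSS' : S ⊆ S' := cubeAt_subset_cubeAt (hB'eq ▸ hsub)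
  rw [hB'eq, h2 S' hSS' (hB'eq ▸ hB'.1)]

end CornerAux

open CornerAux

/-- A concept `c` of an extremal class `C` is a corner (i.e. `C \ {c}` is
extremal) iff `c` lies in exactly one maximal cube of `C`. -/
theorem corner_iff_unique_maximal_cube (n : ℕ) (C : Set (Fin n → Bool))
    (c : Fin n → Bool) (hC : Extremal C) (hc : c ∈ C) :
    Extremal (C \ {c}) ↔
      ∃! B : Set (Fin n → Bool),
        (∃ S : Finset (Fin n), IsCube C B S ∧
          ∀ B' S', IsCube C B' S' → B ⊆ B' → B = B') ∧ c ∈ B := by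
  classical
  set D : Set (Finset (Fin n)) :=
    {S | StronglyShatters C S ∧ ¬ StronglyShatters (C \ {c}) S} with hD
  have hXT : XT C := XT_of_extremal hC
  have hsttdiff : stt (C \ {c}) = stt C \ D := by
    ext S
    constructor
    · intro hS
      exact ⟨stronglyShatters_mono Set.diff_subset hS, fun hSD => hSD.2 hS⟩
    · rintro ⟨hS, hSD⟩
      by_contra hS'
      exact hSD ⟨hS, hS'⟩
  have hDsub : D ⊆ stt C := fun S hS => hS.1
  have hdcard : (stt (C \ {c})).ncard = (stt C).ncard - D.ncard := by
    rw [hsttdiff, Set.ncard_diff hDsub (Set.toFinite _)]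
  have hCc : (C \ {c}).ncard = C.ncard - 1 :=
    Set.ncard_diff_singleton_of_mem hc
  have hC1 : 1 ≤ C.ncard := (Set.ncard_pos (Set.toFinite _)).2 ⟨c, hc⟩
  have hDle : D.ncard ≤ (stt C).ncard := Set.ncard_le_ncard hDsub (Set.toFinite _)
  have hrev := stt_ncard_le (C \ {c}).ncard (C \ {c}) le_rfl
  have hXTC : (stt C).ncard = C.ncard := hXT
  have hD1 : 1 ≤ D.ncard := by omega
  -- main counting equivalence
  have hcount : Extremal (C \ {c}) ↔ D.ncard = 1 := by
    constructor
    · intro hext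
      have := XT_of_extremal hext
      unfold XT at this
      omega
    · intro hd
      apply extremal_of_XT (C \ {c}).ncard _ le_rfl
      unfold XT
      omega
  rw [hcount]
  constructor
  · intro hd
    obtain ⟨S₀, hS₀⟩ := Set.ncard_eq_one.1 hd
    have hS₀D : S₀ ∈ D := hS₀ ▸ rfl
    obtain ⟨h1, h2⟩ := maxS_of_D hS₀D.1 hS₀D.2
    obtain ⟨hcube, hmax⟩ := maxcube_of_maxS h1 h2
    refine ⟨cubeAt c S₀, ⟨⟨S₀, hcube, hmax⟩, mem_cubeAt_self c S₀⟩, ?_⟩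
    rintro B ⟨⟨S, hBS, hmaxB⟩, hcB⟩
    obtain ⟨hBeq, hsub, hmaxS⟩ := maxcube_bridge hBS hmaxB hcB
    have hSD : S ∈ D := D_of_maxS hC hsub hmaxS
    rw [hS₀] at hSD
    simp only [Set.mem_singleton_iff] at hSD
    rw [hBeq, hSD]
  · rintro ⟨B₀, hB₀, huniq⟩
    have hsubsing : ∀ S ∈ D, ∀ T ∈ D, S = T := by
      intro S hS T hT
      obtain ⟨hS1, hS2⟩ := maxS_of_D hS.1 hS.2
      obtain ⟨hT1, hT2⟩ := maxS_of_D hT.1 hT.2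
      obtain ⟨hScube, hSmax⟩ := maxcube_of_maxS hS1 hS2
      obtain ⟨hTcube, hTmax⟩ := maxcube_of_maxS hT1 hT2
      have heS : cubeAt c S = B₀ :=
        huniq _ ⟨⟨S, hScube, hSmax⟩, mem_cubeAt_self c S⟩
      have heT : cubeAt c T = B₀ :=
        huniq _ ⟨⟨T, hTcube, hTmax⟩, mem_cubeAt_self c T⟩
      exact cubeAt_inj (heS.trans heT.symm)
    obtain ⟨S₀, hS₀D⟩ := (Set.ncard_pos (Set.toFinite _)).1 (by omega : 0 < D.ncard)
    rw [Set.ncard_eq_one]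
    refine ⟨S₀, ?_⟩
    ext S
    simp only [Set.mem_singleton_iff]
    exact ⟨fun hS => hsubsing S hS S₀ hS₀D, fun h => h ▸ hS₀D⟩
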